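/- Let G = (V,E) be a finite simple graph, let k ≥ 1, let S ⊆ V carry a partial coloring c : S → [k], and let C = V ∖ S. Suppose every vertex of S is adjacent in G to every vertex of C. Let p = max_{i ∈ [k]} |c^{-1}(i)| (p = 0 if S is empty), let h_S be the number of edges with both endpoints in S whose endpoints receive the same color under c, and let e_C be the number of edges of G with both endpoints in C. Then the maximum, over all extensions c' of c to full colorings of G, of the number of happy edges equals h_S + p·|C| + e_C. -/

import Mathlib

open Finset
open scoped Classical

/-- The number of happy edges of a graph `G` under a full coloring `c`. -/
noncomputable def happyEdgeCount {V : Type*} [Fintype V] {k : ℕ}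
    (G : SimpleGraph V) (c : V → Fin k) : ℕ :=
  (G.edgeFinset.filter (fun e => ∀ x ∈ e, ∀ y ∈ e, c x = c y)).card

section Aux

variable {V : Type*} [Fintype V] {k : ℕ}

/-- Happy edges split into the all-in-`S` part, the mixed part and the all-outside-`S` part. -/
lemma split_happy (G : SimpleGraph V) (S : Finset V) (c' : V → Fin k) :
    (G.edgeFinset.filter (fun e => ∀ x ∈ e, ∀ y ∈ e, c' x = c' y)).card =
      (G.edgeFinset.filter
        (fun e => (∀ x ∈ e, x ∈ S) ∧ ∀ x ∈ e, ∀ y ∈ e, c' x = c' y)).card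
      + (G.edgeFinset.filter
        (fun e => (∃ x ∈ e, x ∈ S) ∧ (∃ x ∈ e, x ∉ S) ∧ ∀ x ∈ e, ∀ y ∈ e, c' x = c' y)).card
      + (G.edgeFinset.filter
        (fun e => (∀ x ∈ e, x ∉ S) ∧ ∀ x ∈ e, ∀ y ∈ e, c' x = c' y)).card := by
  classical
  set hap : Sym2 V → Prop := fun e => ∀ x ∈ e, ∀ y ∈ e, c' x = c' y with hhap
  set H : Finset (Sym2 V) := G.edgeFinset.filter hap with hH
  have e1 : G.edgeFinset.filter
      (fun e => (∀ x ∈ e, x ∈ S) ∧ hap e) = H.filter (fun e => ∀ x ∈ e, x ∈ S) := by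
    rw [hH, Finset.filter_filter]
    exact Finset.filter_congr (fun e _ => and_comm)
  have e2 : G.edgeFinset.filter
      (fun e => (∃ x ∈ e, x ∈ S) ∧ (∃ x ∈ e, x ∉ S) ∧ hap e)
      = (H.filter (fun e => ¬ ∀ x ∈ e, x ∈ S)).filter (fun e => ¬ ∀ x ∈ e, x ∉ S) := by
    rw [hH, Finset.filter_filter, Finset.filter_filter]
    refine Finset.filter_congr (fun e _ => ?_)
    push_neg
    tauto
  have e3 : G.edgeFinset.filter
      (fun e => (∀ x ∈ e, x ∉ S) ∧ hap e)
      = (H.filter (fun e => ¬ ∀ x ∈ e, x ∈ S)).filter (fun e => ∀ x ∈ e, x ∉ S) := by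
    rw [hH, Finset.filter_filter, Finset.filter_filter]
    refine Finset.filter_congr (fun e _ => ?_)
    induction e with
    | _ x y =>
      constructor
      · rintro ⟨hC, h⟩
        have hx : x ∉ S := hC x (by simp)
        exact ⟨h, fun h' => hx (h' x (by simp)), hC⟩
      · rintro ⟨h, _, hC⟩; exact ⟨hC, h⟩
  rw [e1, e2, e3]
  have h1 : (H.filter (fun e => ∀ x ∈ e, x ∈ S)).card
      + (H.filter (fun e => ¬ ∀ x ∈ e, x ∈ S)).card = H.card := by
    simpa using Finset.card_filter_add_card_filter_not
      (s := H) (p := fun e => ∀ x ∈ e, x ∈ S)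
  have h2 : ((H.filter (fun e => ¬ ∀ x ∈ e, x ∈ S)).filter (fun e => ∀ x ∈ e, x ∉ S)).card
      + ((H.filter (fun e => ¬ ∀ x ∈ e, x ∈ S)).filter (fun e => ¬ ∀ x ∈ e, x ∉ S)).card
      = (H.filter (fun e => ¬ ∀ x ∈ e, x ∈ S)).card := by
    simpa using Finset.card_filter_add_card_filter_not
      (s := H.filter (fun e => ¬ ∀ x ∈ e, x ∈ S)) (p := fun e => ∀ x ∈ e, x ∉ S)
  omega

/-- The number of happy mixed edges equals a sum over the outside vertices. -/
lemma mixed_count (G : SimpleGraph V) (S : Finset V) (c c' : V → Fin k)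
    (hadj : ∀ s ∈ S, ∀ v, v ∉ S → G.Adj s v)
    (hc' : ∀ v ∈ S, c' v = c v) :
    (G.edgeFinset.filter
      (fun e => (∃ x ∈ e, x ∈ S) ∧ (∃ x ∈ e, x ∉ S) ∧ ∀ x ∈ e, ∀ y ∈ e, c' x = c' y)).card
    = ∑ v ∈ Sᶜ, (S.filter fun s => c s = c' v).card := by
  classical
  have hrhs : ∑ v ∈ Sᶜ, (S.filter fun s => c s = c' v).card
      = ((Sᶜ ×ˢ S).filter (fun p => c p.2 = c' p.1)).card := by
    rw [Finset.card_filter, Finset.sum_product]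
    exact Finset.sum_congr rfl fun v _ => Finset.card_filter _ _
  rw [hrhs]
  symm
  refine Finset.card_bij (fun p _ => s(p.2, p.1)) ?_ ?_ ?_
  · rintro ⟨v, s⟩ hp
    simp only [Finset.mem_filter, Finset.mem_product, Finset.mem_compl] at hp
    obtain ⟨⟨hv, hs⟩, hcol⟩ := hp
    simp only [Finset.mem_filter]
    refine ⟨SimpleGraph.mem_edgeFinset.mpr ((SimpleGraph.mem_edgeSet G).mpr (hadj s hs v hv)),
      ⟨s, by simp, hs⟩, ⟨v, by simp, hv⟩, ?_⟩
    have key : c' s = c' v := by rw [hc' s hs, hcol]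
    intro x hx y hy
    rcases Sym2.mem_iff.mp hx with rfl | rfl <;> rcases Sym2.mem_iff.mp hy with rfl | rfl <;>
      first | rfl | exact key | exact key.symm
  · rintro ⟨v, s⟩ hp ⟨v', s'⟩ hp' heq
    simp only [Finset.mem_filter, Finset.mem_product, Finset.mem_compl] at hp hp'
    rcases Sym2.eq_iff.mp heq with ⟨h1, h2⟩ | ⟨h1, h2⟩
    · exact Prod.ext h2 h1
    · simp only at h1 h2
      exact absurd (h1 ▸ hp.1.2) hp'.1.1
  · intro e he
    simp only [Finset.mem_filter] at he
    obtain ⟨hedge, ⟨a, ha, haS⟩, ⟨b, hb, hbS⟩, hhap⟩ := he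
    induction e with
    | _ x y =>
      rcases Sym2.mem_iff.mp ha with rfl | rfl
      · have hyone : y ∉ S := by
          rcases Sym2.mem_iff.mp hb with rfl | rfl
          · exact absurd haS hbS
          · exact hbS
        refine ⟨(y, a), ?_, rfl⟩
        simp only [Finset.mem_filter, Finset.mem_product, Finset.mem_compl]
        exact ⟨⟨hyone, haS⟩, by rw [← hc' a haS]; exact hhap a (by simp) y (by simp)⟩
      · have hxone : x ∉ S := by
          rcases Sym2.mem_iff.mp hb with rfl | rfl
          · exact hbS
          · exact absurd haS hbS
        refine ⟨(x, a), ?_, Sym2.eq_swap⟩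
        simp only [Finset.mem_filter, Finset.mem_product, Finset.mem_compl]
        exact ⟨⟨hxone, haS⟩, by rw [← hc' a haS]; exact hhap a (by simp) x (by simp)⟩

/-- Happiness of all-in-`S` edges only depends on the coloring on `S`. -/
lemma allS_congr (G : SimpleGraph V) (S : Finset V) (c c' : V → Fin k)
    (hc' : ∀ v ∈ S, c' v = c v) :
    G.edgeFinset.filter (fun e => (∀ x ∈ e, x ∈ S) ∧ ∀ x ∈ e, ∀ y ∈ e, c' x = c' y)
    = G.edgeFinset.filter (fun e => (∀ x ∈ e, x ∈ S) ∧ ∀ x ∈ e, ∀ y ∈ e, c x = c y) := by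
  refine Finset.filter_congr fun e _ => ?_
  constructor <;> rintro ⟨hall, h⟩ <;> refine ⟨hall, fun x hx y hy => ?_⟩
  · rw [← hc' x (hall x hx), ← hc' y (hall y hy)]; exact h x hx y hy
  · rw [hc' x (hall x hx), hc' y (hall y hy)]; exact h x hx y hy

end Aux

/-- Let `G` be a finite simple graph with a partial coloring `c : S → [k]`,
`C = V ∖ S`, and suppose every vertex of `S` is adjacent to every vertex of `C`.  With `p` the
maximum color multiplicity of `c` on `S`, `h_S` the number of happy edges inside `S`, and `e_C`
the number of edges inside `C`, the maximum number of happy edges over all extensions of `c`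
equals `h_S + p·|C| + e_C`. -/
theorem stmt2 {V : Type*} [Fintype V] (k : ℕ) (hk : 1 ≤ k)
    (G : SimpleGraph V) (S : Finset V) (c : V → Fin k)
    (hadj : ∀ s ∈ S, ∀ v, v ∉ S → G.Adj s v) :
    IsGreatest
      {m : ℕ | ∃ c' : V → Fin k, (∀ v ∈ S, c' v = c v) ∧ m = happyEdgeCount G c'}
      ((G.edgeFinset.filter
          (fun e => (∀ x ∈ e, x ∈ S) ∧ ∀ x ∈ e, ∀ y ∈ e, c x = c y)).card
        + (Finset.univ.sup fun i : Fin k => (S.filter fun v => c v = i).card) * Sᶜ.card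
        + (G.edgeFinset.filter (fun e => ∀ x ∈ e, x ∉ S)).card) := by
  classical
  haveI : Nonempty (Fin k) := ⟨⟨0, hk⟩⟩
  obtain ⟨i₀, -, hi₀⟩ := Finset.exists_mem_eq_sup (Finset.univ : Finset (Fin k))
    Finset.univ_nonempty (fun i => (S.filter fun v => c v = i).card)
  set c' : V → Fin k := fun v => if v ∈ S then c v else i₀ with hc'def
  have hext : ∀ v ∈ S, c' v = c v := fun v hv => if_pos hv
  constructor
  · refine ⟨c', hext, ?_⟩
    rw [happyEdgeCount, split_happy G S c', allS_congr G S c c' hext,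
      mixed_count G S c c' hadj hext]
    congr 1
    · congr 1
      have hsum : ∀ v ∈ Sᶜ, (S.filter fun s => c s = c' v).card
          = Finset.univ.sup fun i : Fin k => (S.filter fun v => c v = i).card := by
        intro v hv
        have : c' v = i₀ := if_neg (Finset.mem_compl.mp hv)
        rw [this, hi₀]
      rw [Finset.sum_congr rfl hsum, Finset.sum_const, smul_eq_mul, mul_comm]
    · refine congrArg Finset.card (Finset.filter_congr fun e he => ?_)
      constructor
      · intro hC
        refine ⟨hC, fun x hx y hy => ?_⟩
        show (if x ∈ S then c x else i₀) = (if y ∈ S then c y else i₀)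
        rw [if_neg (hC x hx), if_neg (hC y hy)]
      · rintro ⟨hC, -⟩; exact hC
  · rintro m ⟨c'', hext'', rfl⟩
    rw [happyEdgeCount, split_happy G S c'', allS_congr G S c c'' hext'',
      mixed_count G S c c'' hadj hext'']
    have hmix : ∑ v ∈ Sᶜ, (S.filter fun s => c s = c'' v).card
        ≤ (Finset.univ.sup fun i : Fin k => (S.filter fun v => c v = i).card) * Sᶜ.card := by
      calc ∑ v ∈ Sᶜ, (S.filter fun s => c s = c'' v).card
          ≤ ∑ _v ∈ Sᶜ, (Finset.univ.sup fun i : Fin k => (S.filter fun v => c v = i).card) :=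
            Finset.sum_le_sum fun v _ =>
              Finset.le_sup (f := fun i : Fin k => (S.filter fun v => c v = i).card)
                (Finset.mem_univ (c'' v))
        _ = _ := by rw [Finset.sum_const, smul_eq_mul, mul_comm]
    have hC : (G.edgeFinset.filter
        (fun e => (∀ x ∈ e, x ∉ S) ∧ ∀ x ∈ e, ∀ y ∈ e, c'' x = c'' y)).card
        ≤ (G.edgeFinset.filter (fun e => ∀ x ∈ e, x ∉ S)).card :=
      Finset.card_le_card (Finset.monotone_filter_right _ fun e _ he => he.1)
    exact add_le_add (add_le_add le_rfl hmix) hC
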